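/- arXiv:1908.06334 — 2 statements merged into one kernel-verified Lean document; each statement's English description precedes it below -/
import Mathlib

section
/- (Lemma 3.1.) Let n be a natural number, let A be a real positive semidefinite (n+1)×(n+1) matrix (indices over Fin n ⊕ Unit, with 'last' the final index), and suppose A(last, last) = 1. If for some index i ∈ Fin n one has A(i,i) = A(i, last) (i.e., A satisfies the constraint Tr(A U_i) = 0 of the SDP (P1′)), then 0 ≤ A(i, last) ≤ 1. (In particular, the optimal solution A* of the SDP (P1′) satisfies A*(i, N+1) ∈ [0,1] for every i, which justifies the rounding rule I_i^{app} = round(A*(i, N+1)).) -/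
open Matrix

/-- Lemma 3.1: if `A ⪰ 0`, `A(last,last) = 1`, and `A(i,i) = A(i,last)`
(the SDP constraint `Tr(A U_i) = 0`), then `0 ≤ A(i,last) ≤ 1`. -/
theorem sdp_solution_entry_in_unit_interval (n : ℕ)
    (A : Matrix (Fin n ⊕ Unit) (Fin n ⊕ Unit) ℝ) (hA : A.PosSemidef)
    (hlast : A (Sum.inr ()) (Sum.inr ()) = 1) (i : Fin n)
    (hdiag : A (Sum.inl i) (Sum.inl i) = A (Sum.inl i) (Sum.inr ())) :
    0 ≤ A (Sum.inl i) (Sum.inr ()) ∧ A (Sum.inl i) (Sum.inr ()) ≤ 1 := by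
  set x := A (Sum.inl i) (Sum.inr ()) with hx
  have hsym : A (Sum.inr ()) (Sum.inl i) = x := by
    have := hA.1
    rw [← Matrix.IsHermitian.apply hA.1]
    simp [hx]
  have key : ∀ t : ℝ, 0 ≤ t ^ 2 * x + 2 * t * x + 1 := by
    intro t
    have h := hA.dotProduct_mulVec_nonneg (Sum.elim (fun j => if j = i then t else 0) (fun _ => 1))
    simp only [dotProduct, mulVec, Fintype.sum_sum_type, Sum.elim_inl, Sum.elim_inr,
      RCLike.star_def, starRingEnd_apply, star_trivial] at h
    simp only [ite_mul, zero_mul, mul_ite, mul_zero, Finset.sum_ite_eq',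
      Finset.mem_univ, if_true, Finset.univ_unique, Finset.sum_const,
      Finset.card_singleton, one_smul] at h
    simp only [Finset.sum_singleton] at h
    rw [hdiag, hsym, hlast] at h
    nlinarith [h]
  constructor
  · by_contra hneg
    push_neg at hneg
    have := key (-2 / x)
    have hx0 : x ≠ 0 := ne_of_lt hneg
    have h1 : (-2 / x) ^ 2 * x = 4 / x := by rw [div_pow]; field_simp; ring
    have h2 : 2 * (-2 / x) * x = -4 := by field_simp; norm_num
    rw [h1, h2] at this
    have : 4 / x < 0 := div_neg_of_pos_of_neg (by norm_num) hneg
    linarith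
  · have := key (-1)
    linarith
end

section
/- Let n be a natural number and let A be a real positive semidefinite (n+1)×(n+1) matrix (indices over Fin n ⊕ Unit, with 'last' the final index) such that rank(A) = 1, A(last, last) = 1, and A(i,i) = A(i, last) for every i ∈ Fin n. Then there exists a vector x ∈ ℝⁿ with x_i ∈ {0,1} for all i such that A = a aᵀ where a = [x; 1]; moreover A(i, last) = x_i for every i. (When the SDR solution A* is rank-one, the relaxation is tight: the binary caching decisions are recovered exactly as I_i = A*(i, N+1).) -/
open Matrix

/-- When the SDR solution is rank-one, the relaxation is tight: a positive
semidefinite `(n+1)×(n+1)` matrix `A` of rank one with `A(last,last) = 1` and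
`A(i,i) = A(i,last)` for all `i` is the lift `A = a aᵀ` of a binary vector
`x` via `a = [x; 1]`, and the caching decisions are recovered as
`x_i = A(i, last)`. -/
theorem rank_one_sdr_recovers_binary_vector (n : ℕ)
    (A : Matrix (Fin n ⊕ Unit) (Fin n ⊕ Unit) ℝ) (hA : A.PosSemidef)
    (hrank : A.rank = 1) (hlast : A (Sum.inr ()) (Sum.inr ()) = 1)
    (hdiag : ∀ i : Fin n, A (Sum.inl i) (Sum.inl i) = A (Sum.inl i) (Sum.inr ())) :
    ∃ x : Fin n → ℝ, (∀ i, x i = 0 ∨ x i = 1) ∧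
      A = Matrix.vecMulVec (Sum.elim x (fun _ => (1 : ℝ)))
            (Sum.elim x (fun _ => (1 : ℝ))) ∧
      ∀ i : Fin n, A (Sum.inl i) (Sum.inr ()) = x i := by
  have hsym : ∀ i j, A j i = A i j := fun i j => by
    have := hA.1.apply i j; simpa using this
  -- columns of A lie in the range of mulVecLin, which has dimension 1
  have hcol : ∀ j, A.mulVec (Pi.single j 1) ∈ LinearMap.range A.mulVecLin :=
    fun j => ⟨Pi.single j 1, rfl⟩
  set v : (Fin n ⊕ Unit) → ℝ := A.mulVec (Pi.single (Sum.inr ()) 1) with hv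
  have hvval : ∀ i, v i = A i (Sum.inr ()) := fun i => by
    simp [hv, mulVec_single]
  have hvne : v ≠ 0 := by
    intro h
    have := hvval (Sum.inr ())
    rw [h] at this
    simp [hlast] at this
  have hv0 : (⟨v, hcol (Sum.inr ())⟩ : LinearMap.range A.mulVecLin) ≠ 0 := by
    intro h
    exact hvne (congrArg Subtype.val h)
  have hone : ∀ w : LinearMap.range A.mulVecLin, ∃ c : ℝ,
      c • (⟨v, hcol (Sum.inr ())⟩ : LinearMap.range A.mulVecLin) = w :=
    (finrank_eq_one_iff_of_nonzero' _ hv0).mp hrank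
  -- key: every entry is a product
  have key : ∀ i j, A i j = A i (Sum.inr ()) * A (Sum.inr ()) j := by
    intro i j
    obtain ⟨c, hc⟩ := hone ⟨A.mulVec (Pi.single j 1), hcol j⟩
    have hc' : ∀ k, c * v k = A k j := fun k => by
      have h := congrArg (fun w : LinearMap.range A.mulVecLin => (w : (Fin n ⊕ Unit) → ℝ) k) hc
      simp only [SetLike.val_smul, Pi.smul_apply, smul_eq_mul] at h
      rw [h]
      simp [mulVec_single]
    have h1 := hc' i
    have h2 := hc' (Sum.inr ())
    rw [hvval, hlast, mul_one] at h2
    rw [hvval] at h1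
    rw [← h1, h2, mul_comm]
  refine ⟨fun i => A (Sum.inl i) (Sum.inr ()), fun i => ?_, ?_, fun i => rfl⟩
  · have h := key (Sum.inl i) (Sum.inl i)
    rw [hdiag i, hsym (Sum.inl i) (Sum.inr ())] at h
    have h0 : A (Sum.inl i) (Sum.inr ()) * (A (Sum.inl i) (Sum.inr ()) - 1) = 0 := by
      nlinarith [h]
    rcases mul_eq_zero.mp h0 with h' | h'
    · exact Or.inl h'
    · exact Or.inr (by linarith)
  · ext i j
    rcases i with i | i <;> rcases j with j | j
    · rw [key (Sum.inl i) (Sum.inl j), hsym (Sum.inl j) (Sum.inr ())]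
      simp [vecMulVec_apply]
    · rw [key (Sum.inl i) (Sum.inr j), hlast]
      simp [vecMulVec_apply]
    · rw [hsym (Sum.inl j) (Sum.inr i)]
      simp [vecMulVec_apply]
    · simp [vecMulVec_apply, hlast]
end
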